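/- Let k be a field, M = k·a ⊕ k·b the 2-dimensional abelian Lie algebra, and S = ⟨a,b,z,t | [z,b] − [t,a], [a,b]⟩ (a one-relator-style graded presentation with a,b in degree 1 and z,t in degree 2). Then there is no Lie algebra Q with S ≅ M * Q (free product of Lie algebras) under an isomorphism restricting to the identity on M. -/

import Mathlib

universe u

open FreeLieAlgebra

variable (k : Type u) [Field k]

section FreeProd

variable (M Q : Type u) [LieRing M] [LieAlgebra k M] [LieRing Q] [LieAlgebra k Q]

noncomputable def fpG₁ (x : M) : FreeLieAlgebra k (M ⊕ Q) := of k (Sum.inl x)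

noncomputable def fpG₂ (x : Q) : FreeLieAlgebra k (M ⊕ Q) := of k (Sum.inr x)

/-- Relators presenting the free product `M * Q` of Lie algebras: the linear and bracket
relations of each factor. -/
noncomputable def fpRel : Set (FreeLieAlgebra k (M ⊕ Q)) :=
  {y | ∃ (c : k) (x₁ x₂ : M),
      y = fpG₁ k M Q (c • x₁ + x₂) - c • fpG₁ k M Q x₁ - fpG₁ k M Q x₂} ∪
  {y | ∃ x₁ x₂ : M, y = fpG₁ k M Q ⁅x₁, x₂⁆ - ⁅fpG₁ k M Q x₁, fpG₁ k M Q x₂⁆} ∪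
  {y | ∃ (c : k) (x₁ x₂ : Q),
      y = fpG₂ k M Q (c • x₁ + x₂) - c • fpG₂ k M Q x₁ - fpG₂ k M Q x₂} ∪
  {y | ∃ x₁ x₂ : Q, y = fpG₂ k M Q ⁅x₁, x₂⁆ - ⁅fpG₂ k M Q x₁, fpG₂ k M Q x₂⁆}

/-- The free product `M * Q` of Lie algebras over `k`. -/
noncomputable def FreeProd : Type u :=
  FreeLieAlgebra k (M ⊕ Q) ⧸
    LieSubmodule.lieSpan k (FreeLieAlgebra k (M ⊕ Q)) (fpRel k M Q)

noncomputable instance : LieRing (FreeProd k M Q) := by unfold FreeProd; infer_instance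
noncomputable instance : LieAlgebra k (FreeProd k M Q) := by unfold FreeProd; infer_instance

/-- The canonical map `M → M * Q`. -/
noncomputable def fpOf₁ (x : M) : FreeProd k M Q :=
  LieSubmodule.Quotient.mk' _ (fpG₁ k M Q x)

end FreeProd

/-- The 2-dimensional abelian Lie algebra `M = ka ⊕ kb = ⟨a, b | [a,b]⟩`. -/
noncomputable def MAb : Type u :=
  FreeLieAlgebra k (Fin 2) ⧸ LieSubmodule.lieSpan k (FreeLieAlgebra k (Fin 2))
    ({⁅of k (0 : Fin 2), of k (1 : Fin 2)⁆} : Set (FreeLieAlgebra k (Fin 2)))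

noncomputable instance : LieRing (MAb k) := by unfold MAb; infer_instance
noncomputable instance : LieAlgebra k (MAb k) := by unfold MAb; infer_instance

/-- The images `a, b` of the generators in `M`. -/
noncomputable def mgen (i : Fin 2) : MAb k :=
  LieSubmodule.Quotient.mk' _ (of k i)

/-- `S = ⟨a,b,z,t | [z,b] − [t,a], [a,b]⟩`, graded with `a,b` in degree 1 and `z,t` in
degree 2 (generators `a = x₀, b = x₁, z = x₂, t = x₃`). -/
noncomputable def SAlg : Type u :=
  FreeLieAlgebra k (Fin 4) ⧸ LieSubmodule.lieSpan k (FreeLieAlgebra k (Fin 4))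
    ({⁅of k (2 : Fin 4), of k (1 : Fin 4)⁆ - ⁅of k (3 : Fin 4), of k (0 : Fin 4)⁆,
      ⁅of k (0 : Fin 4), of k (1 : Fin 4)⁆} : Set (FreeLieAlgebra k (Fin 4)))

noncomputable instance : LieRing (SAlg k) := by unfold SAlg; infer_instance
noncomputable instance : LieAlgebra k (SAlg k) := by unfold SAlg; infer_instance

/-- The images of the generators `a = x₀, b = x₁, z = x₂, t = x₃` in `S`. -/
noncomputable def sgen (i : Fin 4) : SAlg k :=
  LieSubmodule.Quotient.mk' _ (of k i)
set_option linter.unusedSectionVars false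
set_option maxHeartbeats 1000000
attribute [local instance] LieRing.ofAssociativeRing

/-! ### Auxiliary: quotient lifts and generation for quotients of free Lie algebras -/

section QuotAux
variable {L : Type u} [LieRing L] [LieAlgebra k L] {T : Type u} [LieRing T] [LieAlgebra k T]

/-- Lift a Lie algebra hom through a quotient by an ideal contained in its kernel. -/
noncomputable def quotLift (I : LieIdeal k L) (f : L →ₗ⁅k⁆ T) (h : ∀ x ∈ I, f x = 0) :
    (L ⧸ I) →ₗ⁅k⁆ T where
  toLinearMap := I.toSubmodule.liftQ f.toLinearMap (fun x hx => h x hx)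
  map_lie' := by
    intro x y
    obtain ⟨a, rfl⟩ := LieSubmodule.Quotient.surjective_mk' I x
    obtain ⟨b, rfl⟩ := LieSubmodule.Quotient.surjective_mk' I y
    have : ⁅LieSubmodule.Quotient.mk' I a, LieSubmodule.Quotient.mk' I b⁆
        = LieSubmodule.Quotient.mk' I ⁅a, b⁆ := rfl
    rw [this]
    show f ⁅a, b⁆ = ⁅f a, f b⁆
    exact f.map_lie a b

@[simp] lemma quotLift_mk (I : LieIdeal k L) (f : L →ₗ⁅k⁆ T) (h) (x : L) :
    quotLift k I f h (LieSubmodule.Quotient.mk' I x) = f x := rfl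

/-- The quotient map as a Lie algebra hom. -/
noncomputable def quotMkHom (I : LieIdeal k L) : L →ₗ⁅k⁆ L ⧸ I where
  toLinearMap := I.toSubmodule.mkQ
  map_lie' := rfl

@[simp] lemma quotMkHom_apply (I : LieIdeal k L) (x : L) :
    quotMkHom k I x = LieSubmodule.Quotient.mk' I x := rfl

/-- A Lie subalgebra containing the images of all generators of a free Lie algebra under a
surjective hom is everything. -/
theorem gen_of_surj {X : Type*} {L' : Type u} [LieRing L'] [LieAlgebra k L']
    (π : FreeLieAlgebra k X →ₗ⁅k⁆ L') (hπ : Function.Surjective π)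
    (K : LieSubalgebra k L') (h : ∀ x : X, π (of k x) ∈ K) : ∀ y, y ∈ K := by
  intro y
  obtain ⟨w, rfl⟩ := hπ y
  let F : FreeLieAlgebra k X →ₗ⁅k⁆ K := FreeLieAlgebra.lift k (fun x => ⟨π (of k x), h x⟩)
  have hFK : K.incl.comp F = π := by
    apply FreeLieAlgebra.hom_ext
    intro x
    simp [F, FreeLieAlgebra.lift_of_apply]
  have : K.incl (F w) = π w := by
    have := congrArg (fun (g : FreeLieAlgebra k X →ₗ⁅k⁆ L') => g w) hFK
    simpa using this
  rw [← this]
  exact (F w).2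

/-- Two Lie algebra homs agreeing on the images of generators of a free Lie algebra under a
surjective hom agree everywhere. -/
theorem hom_eq_of_surj {X : Type*} {L' : Type u} [LieRing L'] [LieAlgebra k L']
    {T : Type u} [LieRing T] [LieAlgebra k T]
    (π : FreeLieAlgebra k X →ₗ⁅k⁆ L') (hπ : Function.Surjective π)
    {f g : L' →ₗ⁅k⁆ T} (h : ∀ x : X, f (π (of k x)) = g (π (of k x))) : ∀ y, f y = g y := by
  intro y
  obtain ⟨w, rfl⟩ := hπ y
  have hc : f.comp π = g.comp π := by
    apply FreeLieAlgebra.hom_ext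
    intro x
    simpa using h x
  have := congrArg (fun (F : FreeLieAlgebra k X →ₗ⁅k⁆ T) => F w) hc
  simpa using this

end QuotAux

lemma lie_k_eq_zero (a b : k) : ⁅a, b⁆ = 0 := by simp [Ring.lie_def, mul_comm]

/-! ### The Heisenberg Lie algebra on `k × k × k` -/

def Heis3 : Type u := k × k × k

instance : AddCommGroup (Heis3 k) := by unfold Heis3; infer_instance
instance : Module k (Heis3 k) := by unfold Heis3; infer_instance

namespace Heis3
variable {k}

def mk3 (a b c : k) : Heis3 k := (⟨a, b, c⟩ : k × k × k)
def X (v : Heis3 k) : k := (show k × k × k from v).1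
def Y (v : Heis3 k) : k := (show k × k × k from v).2.1
def Z (v : Heis3 k) : k := (show k × k × k from v).2.2

lemma ext3 {v w : Heis3 k} (h1 : v.X = w.X) (h2 : v.Y = w.Y) (h3 : v.Z = w.Z) : v = w := by
  show (show k × k × k from v) = (show k × k × k from w)
  exact Prod.ext h1 (Prod.ext h2 h3)

@[simp] lemma X_add (v w : Heis3 k) : (v + w).X = v.X + w.X := rfl
@[simp] lemma Y_add (v w : Heis3 k) : (v + w).Y = v.Y + w.Y := rfl
@[simp] lemma Z_add (v w : Heis3 k) : (v + w).Z = v.Z + w.Z := rfl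
@[simp] lemma X_smul (c : k) (v : Heis3 k) : (c • v).X = c * v.X := rfl
@[simp] lemma Y_smul (c : k) (v : Heis3 k) : (c • v).Y = c * v.Y := rfl
@[simp] lemma Z_smul (c : k) (v : Heis3 k) : (c • v).Z = c * v.Z := rfl
@[simp] lemma X_zero : (0 : Heis3 k).X = 0 := rfl
@[simp] lemma Y_zero : (0 : Heis3 k).Y = 0 := rfl
@[simp] lemma Z_zero : (0 : Heis3 k).Z = 0 := rfl
@[simp] lemma X_mk3 (a b c : k) : (mk3 a b c).X = a := rfl
@[simp] lemma Y_mk3 (a b c : k) : (mk3 a b c).Y = b := rfl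
@[simp] lemma Z_mk3 (a b c : k) : (mk3 a b c).Z = c := rfl

instance : Bracket (Heis3 k) (Heis3 k) := ⟨fun v w => mk3 0 0 (v.X * w.Y - w.X * v.Y)⟩

@[simp] lemma X_lie (v w : Heis3 k) : (⁅v, w⁆ : Heis3 k).X = 0 := rfl
@[simp] lemma Y_lie (v w : Heis3 k) : (⁅v, w⁆ : Heis3 k).Y = 0 := rfl
@[simp] lemma Z_lie (v w : Heis3 k) : (⁅v, w⁆ : Heis3 k).Z = v.X * w.Y - w.X * v.Y := rfl

instance : LieRing (Heis3 k) :=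
  { (inferInstance : AddCommGroup (Heis3 k)) with
    add_lie := fun u v w => by apply ext3 <;> simp <;> ring
    lie_add := fun u v w => by apply ext3 <;> simp <;> ring
    lie_self := fun u => by apply ext3 <;> simp
    leibniz_lie := fun u v w => by apply ext3 <;> simp <;> ring }

instance : LieAlgebra k (Heis3 k) :=
  { lie_smul := fun c u v => by apply ext3 <;> simp <;> ring }

def xH : Heis3 k := mk3 1 0 0
def yH : Heis3 k := mk3 0 1 0

lemma X_eq_zero_of_lie_yH {v : Heis3 k} (h : ⁅v, (yH : Heis3 k)⁆ = 0) : v.X = 0 := by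
  have := congrArg Z h
  simpa [yH] using this

end Heis3

/-! ### Lie algebra homs out of `S` -/

/-- The defining ideal of `S`. -/
noncomputable def SIdeal : LieIdeal k (FreeLieAlgebra k (Fin 4)) :=
  LieSubmodule.lieSpan k (FreeLieAlgebra k (Fin 4))
    ({⁅of k (2 : Fin 4), of k (1 : Fin 4)⁆ - ⁅of k (3 : Fin 4), of k (0 : Fin 4)⁆,
      ⁅of k (0 : Fin 4), of k (1 : Fin 4)⁆} : Set (FreeLieAlgebra k (Fin 4)))

/-- The Lie algebra hom `S → k` sending generator `j` to `1` and the others to `0`. -/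
noncomputable def sDetect (j : Fin 4) : SAlg k →ₗ⁅k⁆ k :=
  quotLift k (SIdeal k)
    (FreeLieAlgebra.lift k (fun i => if i = j then (1 : k) else 0)) (by
      intro x hx
      have hsub : ({⁅of k (2 : Fin 4), of k (1 : Fin 4)⁆ - ⁅of k (3 : Fin 4), of k (0 : Fin 4)⁆,
          ⁅of k (0 : Fin 4), of k (1 : Fin 4)⁆} : Set (FreeLieAlgebra k (Fin 4))) ⊆
          (FreeLieAlgebra.lift k (fun i => if i = j then (1 : k) else 0)).ker := by
        rintro r (rfl | rfl) <;>
          simp [LieHom.mem_ker, FreeLieAlgebra.lift_of_apply, lie_k_eq_zero]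
      have := (LieSubmodule.lieSpan_le.mpr hsub) hx
      exact LieHom.mem_ker.mp this)

lemma sDetect_sgen (j i : Fin 4) : sDetect k j (sgen k i) = if i = j then (1 : k) else 0 := by
  show (FreeLieAlgebra.lift k (fun i => if i = j then (1 : k) else 0)) (of k i) = _
  simp [FreeLieAlgebra.lift_of_apply]

lemma sgen_rel : ⁅sgen k 2, sgen k 1⁆ = ⁅sgen k 3, sgen k 0⁆ := by
  have h : LieSubmodule.Quotient.mk' (SIdeal k)
      (⁅of k (2 : Fin 4), of k (1 : Fin 4)⁆ - ⁅of k (3 : Fin 4), of k (0 : Fin 4)⁆) = 0 := by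
    rw [LieSubmodule.Quotient.mk_eq_zero]
    exact LieSubmodule.subset_lieSpan (Set.mem_insert _ _)
  rw [map_sub, sub_eq_zero] at h
  exact h

/-- The projection onto `M = MAb` as a Lie algebra hom. -/
noncomputable def mabMk : FreeLieAlgebra k (Fin 2) →ₗ⁅k⁆ MAb k :=
  quotMkHom k (LieSubmodule.lieSpan k (FreeLieAlgebra k (Fin 2))
    ({⁅of k (0 : Fin 2), of k (1 : Fin 2)⁆} : Set (FreeLieAlgebra k (Fin 2))))

lemma mabMk_surj : Function.Surjective (mabMk k) :=
  LieSubmodule.Quotient.surjective_mk' _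

lemma mabMk_of (i : Fin 2) : mabMk k (of k i) = mgen k i := rfl

/-! ### The inclusions of the factors into the free product, as Lie algebra homs -/

section FPHoms
variable (M Q : Type u) [LieRing M] [LieAlgebra k M] [LieRing Q] [LieAlgebra k Q]

/-- The defining ideal of the free product. -/
noncomputable def fpIdeal : LieIdeal k (FreeLieAlgebra k (M ⊕ Q)) :=
  LieSubmodule.lieSpan k (FreeLieAlgebra k (M ⊕ Q)) (fpRel k M Q)

lemma fp_mk_rel {r : FreeLieAlgebra k (M ⊕ Q)} (hr : r ∈ fpRel k M Q) :
    LieSubmodule.Quotient.mk' (fpIdeal k M Q) r = (0 : FreeProd k M Q) := by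
  refine (LieSubmodule.Quotient.mk_eq_zero (fpIdeal k M Q)).mpr ?_
  exact LieSubmodule.subset_lieSpan hr

/-- The canonical map `Q → M * Q`. -/
noncomputable def fpOf₂ (x : Q) : FreeProd k M Q :=
  LieSubmodule.Quotient.mk' _ (fpG₂ k M Q x)

lemma fpRel_mem₁ (c : k) (x y : M) :
    (fpG₁ k M Q (c • x + y) - c • fpG₁ k M Q x - fpG₁ k M Q y) ∈ fpRel k M Q :=
  Or.inl (Or.inl (Or.inl ⟨c, x, y, rfl⟩))

lemma fpRel_mem₂ (x y : M) :
    (fpG₁ k M Q ⁅x, y⁆ - ⁅fpG₁ k M Q x, fpG₁ k M Q y⁆) ∈ fpRel k M Q :=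
  Or.inl (Or.inl (Or.inr ⟨x, y, rfl⟩))

lemma fpRel_mem₃ (c : k) (x y : Q) :
    (fpG₂ k M Q (c • x + y) - c • fpG₂ k M Q x - fpG₂ k M Q y) ∈ fpRel k M Q :=
  Or.inl (Or.inr ⟨c, x, y, rfl⟩)

lemma fpRel_mem₄ (x y : Q) :
    (fpG₂ k M Q ⁅x, y⁆ - ⁅fpG₂ k M Q x, fpG₂ k M Q y⁆) ∈ fpRel k M Q :=
  Or.inr ⟨x, y, rfl⟩

lemma fpOf₁_lin (c : k) (x y : M) :
    fpOf₁ k M Q (c • x + y) = c • fpOf₁ k M Q x + fpOf₁ k M Q y := by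
  have h := fp_mk_rel k M Q (fpRel_mem₁ k M Q c x y)
  rw [map_sub, map_sub, map_smul] at h
  exact sub_eq_zero.mp ((sub_sub _ _ _).symm.trans h)

lemma fpOf₂_lin (c : k) (x y : Q) :
    fpOf₂ k M Q (c • x + y) = c • fpOf₂ k M Q x + fpOf₂ k M Q y := by
  have h := fp_mk_rel k M Q (fpRel_mem₃ k M Q c x y)
  rw [map_sub, map_sub, map_smul] at h
  exact sub_eq_zero.mp ((sub_sub _ _ _).symm.trans h)

lemma fpOf₁_lie (x y : M) :
    fpOf₁ k M Q ⁅x, y⁆ = ⁅fpOf₁ k M Q x, fpOf₁ k M Q y⁆ := by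
  have h := fp_mk_rel k M Q (fpRel_mem₂ k M Q x y)
  rw [map_sub] at h
  exact sub_eq_zero.mp h

lemma fpOf₂_lie (x y : Q) :
    fpOf₂ k M Q ⁅x, y⁆ = ⁅fpOf₂ k M Q x, fpOf₂ k M Q y⁆ := by
  have h := fp_mk_rel k M Q (fpRel_mem₄ k M Q x y)
  rw [map_sub] at h
  exact sub_eq_zero.mp h

lemma fpOf₁_zero : fpOf₁ k M Q 0 = 0 := by
  have h := fpOf₁_lin k M Q 1 0 0
  rw [smul_zero, add_zero, one_smul] at h
  exact right_eq_add.mp h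

lemma fpOf₂_zero : fpOf₂ k M Q (0 : Q) = 0 := by
  have h := fpOf₂_lin k M Q 1 0 0
  rw [smul_zero, add_zero, one_smul] at h
  exact right_eq_add.mp h

/-- The canonical inclusion `M → M * Q` as a Lie algebra hom. -/
noncomputable def fpIncl₁ : M →ₗ⁅k⁆ FreeProd k M Q where
  toFun := fpOf₁ k M Q
  map_add' x y := by
    have h := fpOf₁_lin k M Q 1 x y
    rwa [one_smul, one_smul] at h
  map_smul' c x := by
    have h := fpOf₁_lin k M Q c x 0
    rwa [add_zero, fpOf₁_zero, add_zero] at h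
  map_lie' := by intro x y; exact fpOf₁_lie k M Q x y

/-- The canonical inclusion `Q → M * Q` as a Lie algebra hom. -/
noncomputable def fpIncl₂ : Q →ₗ⁅k⁆ FreeProd k M Q where
  toFun := fpOf₂ k M Q
  map_add' x y := by
    have h := fpOf₂_lin k M Q 1 x y
    rwa [one_smul, one_smul] at h
  map_smul' c x := by
    have h := fpOf₂_lin k M Q c x 0
    rwa [add_zero, fpOf₂_zero, add_zero] at h
  map_lie' := by intro x y; exact fpOf₂_lie k M Q x y

/-- The projection of the free Lie algebra onto the free product. -/
noncomputable def fpMk : FreeLieAlgebra k (M ⊕ Q) →ₗ⁅k⁆ FreeProd k M Q :=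
  quotMkHom k (fpIdeal k M Q)

lemma fpMk_surj : Function.Surjective (fpMk k M Q) :=
  LieSubmodule.Quotient.surjective_mk' _

lemma fpMk_of_inl (m : M) : fpMk k M Q (of k (Sum.inl m)) = fpIncl₁ k M Q m := rfl

lemma fpMk_of_inr (q : Q) : fpMk k M Q (of k (Sum.inr q)) = fpIncl₂ k M Q q := rfl

@[simp] lemma fpIncl₁_apply (x : M) : fpIncl₁ k M Q x = fpOf₁ k M Q x := rfl
@[simp] lemma fpIncl₂_apply (x : Q) : fpIncl₂ k M Q x = fpOf₂ k M Q x := rfl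

end FPHoms
section Main
variable (Q : Type u) [LieRing Q] [LieAlgebra k Q]
variable (e : FreeProd k (MAb k) Q ≃ₗ⁅k⁆ SAlg k)

/-- `S → k` detectors transported to the free product. -/
noncomputable def psi (j : Fin 4) : FreeProd k (MAb k) Q →ₗ⁅k⁆ k :=
  (sDetect k j).comp e.toLieHom

lemma psi_apply (j : Fin 4) (p : FreeProd k (MAb k) Q) :
    psi k Q e j p = sDetect k j (e p) := rfl

/-- Generator images for the Heisenberg representation of `M * Q`. -/
noncomputable def PhiFun : MAb k ⊕ Q → Heis3 k :=
  Sum.elim (fun m => psi k Q e 1 (fpIncl₁ k (MAb k) Q m) • Heis3.yH)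
    (fun q => psi k Q e 2 (fpIncl₂ k (MAb k) Q q) • Heis3.xH)

/-- The Heisenberg representation of `M * Q`. -/
noncomputable def Phi : FreeProd k (MAb k) Q →ₗ⁅k⁆ Heis3 k :=
  quotLift k (fpIdeal k (MAb k) Q) (FreeLieAlgebra.lift k (PhiFun k Q e)) (by
    intro r hr
    have hsub : fpRel k (MAb k) Q ⊆ (FreeLieAlgebra.lift k (PhiFun k Q e)).ker := by
      rintro r' hr'
      simp only [SetLike.mem_coe, LieHom.mem_ker]
      rcases hr' with ((⟨c, x, y, rfl⟩ | ⟨x, y, rfl⟩) | ⟨c, x, y, rfl⟩) | ⟨x, y, rfl⟩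
      · simp only [fpG₁, map_sub, map_smul, FreeLieAlgebra.lift_of_apply,
          PhiFun, Sum.elim_inl]
        rw [map_add, map_smul, map_add, map_smul]
        simp only [smul_eq_mul, add_smul, mul_smul]
        abel
      · simp only [fpG₁, map_sub, FreeLieAlgebra.lift_of_apply, PhiFun, Sum.elim_inl,
          LieHom.map_lie]
        simp [lie_k_eq_zero, smul_lie, lie_smul, lie_self]
      · simp only [fpG₂, map_sub, map_smul, FreeLieAlgebra.lift_of_apply,
          PhiFun, Sum.elim_inr]
        rw [map_add, map_smul, map_add, map_smul]
        simp only [smul_eq_mul, add_smul, mul_smul]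
        abel
      · simp only [fpG₂, map_sub, FreeLieAlgebra.lift_of_apply, PhiFun, Sum.elim_inr,
          LieHom.map_lie]
        simp [lie_k_eq_zero, smul_lie, lie_smul, lie_self]
    have := (LieSubmodule.lieSpan_le.mpr hsub) hr
    exact LieHom.mem_ker.mp this)

lemma Phi_mk_of (s : MAb k ⊕ Q) :
    Phi k Q e (LieSubmodule.Quotient.mk' (fpIdeal k (MAb k) Q) (of k s))
      = PhiFun k Q e s := by
  show (FreeLieAlgebra.lift k (PhiFun k Q e)) (of k s) = _
  exact FreeLieAlgebra.lift_of_apply _ _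

lemma Phi_incl₁ (m : MAb k) :
    Phi k Q e (fpIncl₁ k (MAb k) Q m)
      = psi k Q e 1 (fpIncl₁ k (MAb k) Q m) • Heis3.yH :=
  Phi_mk_of k Q e (Sum.inl m)

lemma Phi_incl₂ (q : Q) :
    Phi k Q e (fpIncl₂ k (MAb k) Q q)
      = psi k Q e 2 (fpIncl₂ k (MAb k) Q q) • Heis3.xH :=
  Phi_mk_of k Q e (Sum.inr q)

/-- The subalgebra of the free product where `ψ₂` agrees with the `x`-coordinate of the
Heisenberg representation. -/
noncomputable def Ksub : LieSubalgebra k (FreeProd k (MAb k) Q) where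
  carrier := {p | psi k Q e 2 p = (Phi k Q e p).X}
  add_mem' := by
    intro a b ha hb
    simp only [Set.mem_setOf_eq] at *
    rw [map_add, map_add, Heis3.X_add, ha, hb]
  zero_mem' := by
    simp only [Set.mem_setOf_eq, map_zero, Heis3.X_zero]
  smul_mem' := by
    intro c p hp
    simp only [Set.mem_setOf_eq] at *
    rw [map_smul, map_smul, Heis3.X_smul, hp, smul_eq_mul]
  lie_mem' := by
    intro a b ha hb
    simp only [Set.mem_setOf_eq] at *
    rw [LieHom.map_lie, LieHom.map_lie, Heis3.X_lie, lie_k_eq_zero]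

end Main
/-- There is no Lie algebra `Q` with `S ≅ M * Q` by an isomorphism restricting to the
identity on `M = ka ⊕ kb` (i.e. carrying the canonical copy of `M` in `M * Q` onto the
copy `⟨a,b⟩` of `M` in `S` generator-by-generator). -/
theorem S_not_freeProd_over_M (Q : Type u) [LieRing Q] [LieAlgebra k Q] :
    ¬ ∃ e : FreeProd k (MAb k) Q ≃ₗ⁅k⁆ SAlg k,
        (e (fpOf₁ k (MAb k) Q (mgen k 0)) = sgen k 0) ∧
        (e (fpOf₁ k (MAb k) Q (mgen k 1)) = sgen k 1) := by
  rintro ⟨e, he0, he1⟩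
  -- `ψ₂ = sDetect 2 ∘ e` vanishes on the canonical copy of `M` in `M * Q`
  have hM : ∀ m : MAb k, psi k Q e 2 (fpIncl₁ k (MAb k) Q m) = 0 := by
    have key : ∀ y, ((psi k Q e 2).comp (fpIncl₁ k (MAb k) Q)) y = (0 : MAb k →ₗ⁅k⁆ k) y := by
      refine hom_eq_of_surj k (X := Fin 2) (mabMk k) (mabMk_surj k) ?_
      intro x
      fin_cases x
      · show sDetect k 2 (e (fpOf₁ k (MAb k) Q (mgen k 0))) = _
        rw [he0, sDetect_sgen]
        simp [LieHom.zero_apply]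
      · show sDetect k 2 (e (fpOf₁ k (MAb k) Q (mgen k 1))) = _
        rw [he1, sDetect_sgen]
        simp [LieHom.zero_apply]
    intro m
    simpa using key m
    -- on all of `M * Q`, `ψ₂` is computed by the `X`-coordinate of `Φ`
  have hKey : ∀ p : FreeProd k (MAb k) Q, psi k Q e 2 p = (Phi k Q e p).X := by
    intro p
    have hgen : ∀ s : MAb k ⊕ Q, fpMk k (MAb k) Q (of k s) ∈ Ksub k Q e := by
      rintro (m | q)
      · show psi k Q e 2 (fpIncl₁ k (MAb k) Q m) = (Phi k Q e (fpIncl₁ k (MAb k) Q m)).X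
        rw [Phi_incl₁, hM, Heis3.X_smul]
        simp [Heis3.yH]
      · show psi k Q e 2 (fpIncl₂ k (MAb k) Q q) = (Phi k Q e (fpIncl₂ k (MAb k) Q q)).X
        rw [Phi_incl₂, Heis3.X_smul]
        simp [Heis3.xH]
    exact gen_of_surj k (fpMk k (MAb k) Q) (fpMk_surj k (MAb k) Q) (Ksub k Q e) hgen p
  -- the relation `[z, b] = [t, a]` transported to `M * Q`
  have hrel : ⁅e.symm (sgen k 2), fpOf₁ k (MAb k) Q (mgen k 1)⁆
      = ⁅e.symm (sgen k 3), fpOf₁ k (MAb k) Q (mgen k 0)⁆ := by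
    apply EquivLike.injective e
    rw [LieEquiv.map_lie, LieEquiv.map_lie, e.apply_symm_apply, e.apply_symm_apply, he0, he1]
    exact sgen_rel k
  have h2 := congrArg (Phi k Q e) hrel
  rw [LieHom.map_lie, LieHom.map_lie] at h2
  have hPb : Phi k Q e (fpOf₁ k (MAb k) Q (mgen k 1)) = Heis3.yH := by
    rw [← fpIncl₁_apply, Phi_incl₁]
    have h1 : psi k Q e 1 (fpIncl₁ k (MAb k) Q (mgen k 1)) = 1 := by
      show sDetect k 1 (e (fpOf₁ k (MAb k) Q (mgen k 1))) = 1
      rw [he1, sDetect_sgen]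
      simp
    rw [h1, one_smul]
  have hPa : Phi k Q e (fpOf₁ k (MAb k) Q (mgen k 0)) = 0 := by
    rw [← fpIncl₁_apply, Phi_incl₁]
    have h0 : psi k Q e 1 (fpIncl₁ k (MAb k) Q (mgen k 0)) = 0 := by
      show sDetect k 1 (e (fpOf₁ k (MAb k) Q (mgen k 0))) = 0
      rw [he0, sDetect_sgen]
      simp
    rw [h0, zero_smul]
  rw [hPb, hPa, lie_zero] at h2
  have hX0 : (Phi k Q e (e.symm (sgen k 2))).X = 0 := Heis3.X_eq_zero_of_lie_yH h2
  have hX1 : psi k Q e 2 (e.symm (sgen k 2)) = 1 := by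
    show sDetect k 2 (e (e.symm (sgen k 2))) = 1
    rw [e.apply_symm_apply, sDetect_sgen]
    simp
  rw [hKey, hX0] at hX1
  exact zero_ne_one hX1
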